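/- Let n ≥ 1, let H ∈ ℂ[x₁,…,xₙ] be a squarefree, nonconstant homogeneous polynomial, and let P ∈ ℂ[x₁,…,xₙ] be any polynomial such that [H,P] = 0, i.e. (∂H/∂xᵢ)(∂P/∂xⱼ) − (∂H/∂xⱼ)(∂P/∂xᵢ) = 0 for all 1 ≤ i < j ≤ n. Then P ∈ ℂ[H], i.e. there exists a univariate polynomial w ∈ ℂ[t] such that P = w(H). -/

import Mathlib

open MvPolynomial

namespace Br

variable {n : ℕ}

lemma coeff_pderiv (i : Fin n) (f : MvPolynomial (Fin n) ℂ) (d : Fin n →₀ ℕ) :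
    MvPolynomial.coeff d (pderiv i f) =
      ((d i : ℂ) + 1) * MvPolynomial.coeff (d + Finsupp.single i 1) f := by
  induction f using MvPolynomial.induction_on' with
  | add p q hp hq => simp [hp, hq, mul_add]
  | monomial s a =>
    rw [pderiv_monomial, coeff_monomial, coeff_monomial]
    by_cases h : s = d + Finsupp.single i 1
    · subst h
      rw [if_pos (add_tsub_cancel_right _ _), if_pos rfl]
      simp [mul_comm]
    · rw [if_neg h, mul_zero]
      by_cases h2 : s - Finsupp.single i 1 = d
      · rw [if_pos h2]
        have hsi : s i = 0 := by
          by_contra hs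
          apply h
          rw [← h2, tsub_add_cancel_of_le]
          exact Finsupp.single_le_iff.mpr (Nat.one_le_iff_ne_zero.mpr hs)
        simp [hsi]
      · rw [if_neg h2]

lemma eq_C_of_pderiv (f : MvPolynomial (Fin n) ℂ) (h : ∀ i, pderiv i f = 0) :
    f = C (coeff 0 f) := by
  ext d
  rcases eq_or_ne d 0 with rfl | hd
  · simp
  · obtain ⟨i, hi⟩ : ∃ i, d i ≠ 0 := by
      by_contra hall
      push_neg at hall
      exact hd (Finsupp.ext hall)
    have hle : Finsupp.single i 1 ≤ d := Finsupp.single_le_iff.mpr (Nat.one_le_iff_ne_zero.mpr hi)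
    have := coeff_pderiv i f (d - Finsupp.single i 1)
    rw [h i, tsub_add_cancel_of_le hle] at this
    have h0 : coeff (d - Finsupp.single i 1) (0 : MvPolynomial (Fin n) ℂ) = 0 := by simp
    rw [h0] at this
    have : coeff d f = 0 := by
      rcases mul_eq_zero.mp this.symm with h' | h'
      · exact absurd h' (Nat.cast_add_one_ne_zero _)
      · exact h'
    rw [this, coeff_C, if_neg (by simpa using (Ne.symm hd))]

end Br

namespace Br

variable {n : ℕ}

lemma degree_eq_sum (d : Fin n →₀ ℕ) : d.degree = ∑ i, d i := by
  rw [Finsupp.degree]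
  exact Finset.sum_subset (Finset.subset_univ _) (fun i _ hi => by
    simpa using Finsupp.notMem_support_iff.mp hi)

lemma degree_add (a b : Fin n →₀ ℕ) : (a + b).degree = a.degree + b.degree := by
  simp [degree_eq_sum, Finset.sum_add_distrib]

lemma degree_single (i : Fin n) (k : ℕ) : (Finsupp.single i k).degree = k := by
  simp [degree_eq_sum, Finsupp.single_apply]

lemma isHomog_pderiv {f : MvPolynomial (Fin n) ℂ} {m : ℕ} (hf : f.IsHomogeneous (m + 1))
    (i : Fin n) : (pderiv i f).IsHomogeneous m := by
  conv_lhs => rw [f.as_sum]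
  rw [map_sum]
  apply IsHomogeneous.sum
  intro s hs
  rw [pderiv_monomial]
  by_cases hsi : s i = 0
  · rw [hsi]
    simpa using isHomogeneous_zero (Fin n) ℂ m
  · apply isHomogeneous_monomial
    have hle : Finsupp.single i 1 ≤ s := Finsupp.single_le_iff.mpr (Nat.one_le_iff_ne_zero.mpr hsi)
    have hdeg : s.degree = m + 1 := by
      rw [Finsupp.degree_eq_weight_one]; exact hf (Finsupp.mem_support_iff.mp hs)
    have : (s - Finsupp.single i 1 + Finsupp.single i 1).degree = m + 1 := by
      rw [tsub_add_cancel_of_le hle, hdeg]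
    rw [degree_add, degree_single] at this
    omega

lemma euler {f : MvPolynomial (Fin n) ℂ} {m : ℕ} (hf : f.IsHomogeneous m) :
    ∑ i, X i * pderiv i f = C (m : ℂ) * f := by
  conv_rhs => rw [f.as_sum]
  rw [Finset.mul_sum]
  have : ∀ i, X i * pderiv i f = ∑ s ∈ f.support, X (R := ℂ) i * pderiv i (monomial s (coeff s f)) := by
    intro i
    conv_lhs => rw [f.as_sum]
    rw [map_sum, Finset.mul_sum]
  simp_rw [this]
  rw [Finset.sum_comm]
  apply Finset.sum_congr rfl
  intro s hs
  have hdeg : s.degree = m := by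
    rw [Finsupp.degree_eq_weight_one]; exact hf (Finsupp.mem_support_iff.mp hs)
  have key : ∀ i, X (R := ℂ) i * pderiv i (monomial s (coeff s f)) = monomial s (coeff s f * s i) := by
    intro i
    rw [pderiv_monomial, X, monomial_mul]
    by_cases hsi : s i = 0
    · simp [hsi]
    · rw [one_mul]
      congr 1
      rw [add_comm, tsub_add_cancel_of_le (Finsupp.single_le_iff.mpr (Nat.one_le_iff_ne_zero.mpr hsi))]
  simp_rw [key]
  rw [← map_sum (monomial s), C_mul_monomial]
  congr 1
  rw [← Finset.mul_sum]
  rw [← Nat.cast_sum, ← degree_eq_sum, hdeg, mul_comm]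

end Br

namespace Br

variable {n : ℕ}

lemma coeff_aeval_line (a : Fin n → ℂ) (f : MvPolynomial (Fin n) ℂ) (m : ℕ) :
    (MvPolynomial.aeval (fun i => Polynomial.C (a i) * Polynomial.X) f).coeff m
      = MvPolynomial.eval a (homogeneousComponent m f) := by
  induction f using MvPolynomial.induction_on' with
  | add p q hp hq => simp [map_add, Polynomial.coeff_add, hp, hq]
  | monomial s c =>
    rw [MvPolynomial.aeval_monomial]
    have hprod : (s.prod fun i k => (Polynomial.C (a i) * Polynomial.X) ^ k)
        = Polynomial.C (s.prod fun i k => a i ^ k) * Polynomial.X ^ s.degree := by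
      rw [Finsupp.prod, Finsupp.prod, Finsupp.degree]
      simp_rw [mul_pow, ← Polynomial.C_pow]
      rw [Finset.prod_mul_distrib, ← map_prod, Finset.prod_pow_eq_pow_sum]
      rfl
    have hcomp : homogeneousComponent m (monomial s c) =
        if m = s.degree then monomial s c else 0 :=
      homogeneousComponent_of_mem
        ((mem_homogeneousSubmodule _ _).mpr (isHomogeneous_monomial c rfl))
    rw [hprod, hcomp]
    have : algebraMap ℂ (Polynomial ℂ) c = Polynomial.C c := rfl
    rw [this, ← mul_assoc, ← Polynomial.C_mul, Polynomial.coeff_C_mul, Polynomial.coeff_X_pow]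
    split_ifs with h
    · rw [mul_one, eval_monomial]
    · rw [mul_zero, map_zero]

end Br

namespace Br

variable {n : ℕ}

lemma topComp_ne_zero {f : MvPolynomial (Fin n) ℂ} (hf : f ≠ 0) :
    homogeneousComponent f.totalDegree f ≠ 0 := by
  obtain ⟨d, hd, hdeg⟩ := Finset.exists_mem_eq_sup f.support
    (MvPolynomial.support_nonempty.mpr hf) (fun s => s.sum fun _ e => e)
  intro h0
  have := coeff_homogeneousComponent (φ := f) (n := f.totalDegree) d
  rw [h0] at this
  simp only [coeff_zero] at this
  have hdd : d.degree = f.totalDegree := by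
    rw [Finsupp.degree, MvPolynomial.totalDegree, hdeg]; rfl
  rw [if_pos hdd] at this
  exact Finsupp.mem_support_iff.mp hd this.symm

lemma totalDegree_mul_eq {f g : MvPolynomial (Fin n) ℂ} (hf : f ≠ 0) (hg : g ≠ 0) :
    (f * g).totalDegree = f.totalDegree + g.totalDegree := by
  obtain ⟨a, ha⟩ : ∃ a : Fin n → ℂ, MvPolynomial.eval a
      (homogeneousComponent f.totalDegree f * homogeneousComponent g.totalDegree g) ≠ 0 := by
    by_contra hcon
    push_neg at hcon
    exact mul_ne_zero (topComp_ne_zero hf) (topComp_ne_zero hg)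
      (MvPolynomial.funext (fun x => by simpa using hcon x))
  rw [map_mul] at ha
  have hFa := left_ne_zero_of_mul ha
  have hGa := right_ne_zero_of_mul ha
  set φ := (MvPolynomial.aeval (R := ℂ) fun i : Fin n => Polynomial.C (a i) * Polynomial.X)
    with hφ
  have hdeg : ∀ h : MvPolynomial (Fin n) ℂ, (φ h).natDegree ≤ h.totalDegree := by
    intro h
    apply Polynomial.natDegree_le_iff_coeff_eq_zero.mpr
    intro N hN
    rw [hφ, coeff_aeval_line, homogeneousComponent_eq_zero _ _ hN, map_zero]
  have hnef : φ f ≠ 0 := fun h0 => hFa (by rw [← coeff_aeval_line a f, ← hφ, h0]; simp)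
  have hneg : φ g ≠ 0 := fun h0 => hGa (by rw [← coeff_aeval_line a g, ← hφ, h0]; simp)
  have hdf : (φ f).natDegree = f.totalDegree :=
    le_antisymm (hdeg f) (Polynomial.le_natDegree_of_ne_zero
      (by rw [hφ, coeff_aeval_line]; exact hFa))
  have hdg : (φ g).natDegree = g.totalDegree :=
    le_antisymm (hdeg g) (Polynomial.le_natDegree_of_ne_zero
      (by rw [hφ, coeff_aeval_line]; exact hGa))
  refine le_antisymm (totalDegree_mul f g) ?_
  calc f.totalDegree + g.totalDegree = (φ f * φ g).natDegree := by
        rw [Polynomial.natDegree_mul hnef hneg, hdf, hdg]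
    _ = (φ (f * g)).natDegree := by rw [map_mul]
    _ ≤ (f * g).totalDegree := hdeg _

lemma totalDegree_le_of_dvd {a b : MvPolynomial (Fin n) ℂ} (h : a ∣ b) (hb : b ≠ 0) :
    a.totalDegree ≤ b.totalDegree := by
  obtain ⟨c, rfl⟩ := h
  obtain ⟨ha, hc⟩ := mul_ne_zero_iff.mp hb
  rw [totalDegree_mul_eq ha hc]
  exact Nat.le_add_right _ _

lemma totalDegree_pderiv_lt {f : MvPolynomial (Fin n) ℂ} {i : Fin n}
    (h : pderiv i f ≠ 0) : (pderiv i f).totalDegree < f.totalDegree := by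
  have key : ∀ d ∈ (pderiv i f).support, d.degree < f.totalDegree := by
    intro d hd
    have hc : coeff (d + Finsupp.single i 1) f ≠ 0 := by
      intro h0
      apply MvPolynomial.mem_support_iff.mp hd
      rw [coeff_pderiv, h0, mul_zero]
    have h1 : (d + Finsupp.single i 1).degree ≤ f.totalDegree :=
      MvPolynomial.le_totalDegree (MvPolynomial.mem_support_iff.mpr hc)
    rw [degree_add, degree_single] at h1
    omega
  obtain ⟨d0, hd0⟩ := MvPolynomial.support_nonempty.mpr h
  have hpos : 0 < f.totalDegree := lt_of_le_of_lt (Nat.zero_le _) (key d0 hd0)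
  rw [MvPolynomial.totalDegree]
  apply (Finset.sup_lt_iff (by exact hpos)).mpr
  intro d hd
  exact key d hd

lemma prime_not_dvd_pderiv {π : MvPolynomial (Fin n) ℂ} {i : Fin n}
    (h : pderiv i π ≠ 0) : ¬ π ∣ pderiv i π := fun hdvd =>
  absurd (totalDegree_le_of_dvd hdvd h) (not_le.mpr (totalDegree_pderiv_lt h))

end Br

namespace Br

variable {n : ℕ}

lemma sqf_dvd {R : Type*} [CommRing R] [IsDomain R] [UniqueFactorizationMonoid R]
    (h : R) (hh : Squarefree h) (y : R) (hp : ∀ p, Prime p → p ∣ h → p ∣ y) : h ∣ y := by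
  induction h using UniqueFactorizationMonoid.induction_on_prime generalizing y with
  | h₁ => exact absurd hh not_squarefree_zero
  | h₂ x hx => exact hx.dvd
  | h₃ a p ha hprime ih =>
    have hpy : p ∣ y := hp p hprime (dvd_mul_right p a)
    obtain ⟨z, rfl⟩ := hpy
    have hpa : ¬ p ∣ a := fun hd =>
      hprime.not_unit (hh p (mul_dvd_mul_left p hd))
    have hsa : Squarefree a := hh.squarefree_of_dvd (dvd_mul_left a p)
    refine mul_dvd_mul_left p (ih hsa z fun q hq hqa => ?_)
    have hqy : q ∣ p * z := hp q hq (Dvd.dvd.mul_left hqa p)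
    rcases hq.dvd_or_dvd hqy with hqp | hqz
    · exact absurd ((hq.associated_of_dvd hprime hqp).symm.dvd.trans hqa) hpa
    · exact hqz

lemma homog_factor {H Q₂ : MvPolynomial (Fin n) ℂ} {dA e : ℕ} (hH : H.IsHomogeneous dA)
    (hHne : H ≠ 0) (hQne : Q₂ ≠ 0) (hmul : (H * Q₂).IsHomogeneous e) :
    ∃ k, dA + k = e ∧ Q₂.IsHomogeneous k := by
  have hdecomp : Q₂ = ∑ k ∈ Finset.range (Q₂.totalDegree + 1), homogeneousComponent k Q₂ :=
    (sum_homogeneousComponent _).symm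
  have hcomp : ∀ k, dA + k ≠ e → homogeneousComponent k Q₂ = 0 := by
    intro k hk
    rcases lt_or_ge Q₂.totalDegree k with hlt | hle
    · exact homogeneousComponent_eq_zero _ _ hlt
    · have h1 : H * homogeneousComponent k Q₂ = homogeneousComponent (dA + k) (H * Q₂) := by
        conv_rhs => rw [hdecomp]
        rw [Finset.mul_sum, map_sum]
        rw [Finset.sum_eq_single_of_mem k (Finset.mem_range.mpr (by omega))]
        · rw [homogeneousComponent_of_mem ((mem_homogeneousSubmodule _ _).mpr
            (hH.mul (homogeneousComponent_isHomogeneous k Q₂))), if_pos rfl]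
        · intro j _ hj
          rw [homogeneousComponent_of_mem ((mem_homogeneousSubmodule _ _).mpr
            (hH.mul (homogeneousComponent_isHomogeneous j Q₂))), if_neg (by omega)]
      have h2 : homogeneousComponent (dA + k) (H * Q₂) = 0 := by
        rw [homogeneousComponent_of_mem ((mem_homogeneousSubmodule _ _).mpr hmul),
          if_neg hk]
      rw [h2] at h1
      exact (mul_eq_zero.mp h1).resolve_left hHne
  by_cases hex : ∃ k ∈ Finset.range (Q₂.totalDegree + 1), dA + k = e
  · obtain ⟨k₀, hk₀m, hk₀⟩ := hex
    have hQ : Q₂ = homogeneousComponent k₀ Q₂ := by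
      conv_lhs => rw [hdecomp]
      exact Finset.sum_eq_single_of_mem k₀ hk₀m (fun j _ hj => hcomp j (by omega))
    exact ⟨k₀, hk₀, hQ ▸ homogeneousComponent_isHomogeneous k₀ Q₂⟩
  · push_neg at hex
    exact absurd (hdecomp.trans (Finset.sum_eq_zero fun k hk => hcomp k (hex k hk))) hQne

end Br

namespace Br

variable {n : ℕ}

lemma key (H : MvPolynomial (Fin n) ℂ) (dH : ℕ) (hHsf : Squarefree H)
    (hHhom : H.IsHomogeneous dH) (hdH : 0 < dH) :
    ∀ e, ∀ Q : MvPolynomial (Fin n) ℂ, Q.IsHomogeneous e →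
      (∀ i j, pderiv i H * pderiv j Q - pderiv j H * pderiv i Q = 0) →
      ∃ w : Polynomial ℂ, Q = Polynomial.aeval H w := by
  intro e
  induction e using Nat.strong_induction_on with
  | _ e ih =>
  intro Q hQhom hQbr
  rcases eq_or_ne Q 0 with rfl | hQne
  · exact ⟨0, by simp⟩
  rcases Nat.eq_zero_or_pos e with rfl | he
  · refine ⟨Polynomial.C (coeff 0 Q), ?_⟩
    have hQC : Q = C (coeff 0 Q) := by
      rw [← homogeneousComponent_zero,
        homogeneousComponent_of_mem ((mem_homogeneousSubmodule _ _).mpr hQhom), if_pos rfl]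
    rw [Polynomial.aeval_C, MvPolynomial.algebraMap_eq]
    exact hQC
  have hHne : H ≠ 0 := hHsf.ne_zero
  have heul : ∀ i, C (e : ℂ) * Q * pderiv i H = C (dH : ℂ) * H * pderiv i Q := by
    intro i
    have h1 : ∑ j, X j * (pderiv i H * pderiv j Q) = pderiv i H * (C (e : ℂ) * Q) := by
      rw [← euler hQhom, Finset.mul_sum]
      exact Finset.sum_congr rfl fun j _ => by ring
    have h2 : ∑ j, X j * (pderiv j H * pderiv i Q) = C (dH : ℂ) * H * pderiv i Q := by
      rw [← euler hHhom, Finset.sum_mul]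
      exact Finset.sum_congr rfl fun j _ => by ring
    have h3 : ∑ j, X j * (pderiv i H * pderiv j Q) = ∑ j, X j * (pderiv j H * pderiv i Q) :=
      Finset.sum_congr rfl fun j _ => by rw [sub_eq_zero.mp (hQbr i j)]
    rw [h1, h2] at h3
    linear_combination h3
  have hdvd : H ∣ Q := by
    apply sqf_dvd H hHsf
    intro π hπ hπH
    have hπne0 : π ≠ 0 := hπ.ne_zero
    obtain ⟨i, hi⟩ : ∃ i, pderiv i π ≠ 0 := by
      by_contra hall
      push_neg at hall
      have hCc := eq_C_of_pderiv π hall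
      have hc : coeff 0 π ≠ 0 := fun h0 => hπne0 (by rw [hCc, h0, map_zero])
      exact hπ.not_unit (hCc ▸ IsUnit.map (C : ℂ →+* MvPolynomial (Fin n) ℂ)
        (isUnit_iff_ne_zero.mpr hc))
    have hπHc := hπH
    obtain ⟨g, hg⟩ := hπHc
    have hπg : ¬ π ∣ g := fun hd =>
      hπ.not_unit (hHsf π (by rw [hg]; exact mul_dvd_mul_left π hd))
    have hπdH : ¬ π ∣ pderiv i H := by
      intro hd
      rw [hg, pderiv_mul] at hd
      have hdd : π ∣ pderiv i π * g :=
        (dvd_add_left (dvd_mul_right π (pderiv i g))).mp hd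
      rcases hπ.dvd_or_dvd hdd with h1 | h2
      · exact prime_not_dvd_pderiv hi h1
      · exact hπg h2
    have hπRHS : π ∣ C (e : ℂ) * Q * pderiv i H := by
      rw [heul i]
      exact Dvd.dvd.mul_right (Dvd.dvd.mul_left hπH _) _
    rcases hπ.dvd_or_dvd hπRHS with h1 | h2
    · rcases hπ.dvd_or_dvd h1 with h3 | h4
      · exact absurd (isUnit_of_dvd_unit h3 (IsUnit.map (C : ℂ →+* MvPolynomial (Fin n) ℂ)
          (isUnit_iff_ne_zero.mpr (Nat.cast_ne_zero.mpr he.ne')))) hπ.not_unit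
      · exact h4
    · exact absurd h2 hπdH
  obtain ⟨Q₂, hQ₂⟩ := hdvd
  have hQ₂ne : Q₂ ≠ 0 := fun h0 => hQne (by rw [hQ₂, h0, mul_zero])
  obtain ⟨k, hk, hQ₂hom⟩ := homog_factor hHhom hHne hQ₂ne (hQ₂ ▸ hQhom)
  have hbr2 : ∀ i j, pderiv i H * pderiv j Q₂ - pderiv j H * pderiv i Q₂ = 0 := by
    intro i j
    have hb := hQbr i j
    rw [hQ₂, pderiv_mul, pderiv_mul] at hb
    have hH0 : H * (pderiv i H * pderiv j Q₂ - pderiv j H * pderiv i Q₂) = 0 := by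
      linear_combination hb
    exact (mul_eq_zero.mp hH0).resolve_left hHne
  obtain ⟨w', hw'⟩ := ih k (by omega) Q₂ hQ₂hom hbr2
  exact ⟨Polynomial.X * w', by rw [hQ₂, hw', map_mul, Polynomial.aeval_X]⟩

end Br

namespace Br

variable {n : ℕ}

lemma comp_bracket {H P : MvPolynomial (Fin n) ℂ} {dH : ℕ} (hHhom : H.IsHomogeneous dH)
    (hdH : 0 < dH)
    (hbr : ∀ i j : Fin n, pderiv i H * pderiv j P - pderiv j H * pderiv i P = 0) (e₀ : ℕ) :
    ∀ i j : Fin n, pderiv i H * pderiv j (homogeneousComponent e₀ P) -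
      pderiv j H * pderiv i (homogeneousComponent e₀ P) = 0 := by
  intro i j
  have hBhom : ∀ e, 1 ≤ e → (pderiv i H * pderiv j (homogeneousComponent e P) -
      pderiv j H * pderiv i (homogeneousComponent e P)).IsHomogeneous ((dH - 1) + (e - 1)) := by
    intro e he
    have h1 : H.IsHomogeneous ((dH - 1) + 1) := by rwa [Nat.sub_add_cancel hdH]
    have h2 : (homogeneousComponent e P).IsHomogeneous ((e - 1) + 1) := by
      rw [Nat.sub_add_cancel he]; exact homogeneousComponent_isHomogeneous e P
    exact ((isHomog_pderiv h1 i).mul (isHomog_pderiv h2 j)).sub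
      ((isHomog_pderiv h1 j).mul (isHomog_pderiv h2 i))
  have hB0 : pderiv i H * pderiv j (homogeneousComponent 0 P) -
      pderiv j H * pderiv i (homogeneousComponent 0 P) = 0 := by
    rw [homogeneousComponent_zero]
    simp
  rcases Nat.eq_zero_or_pos e₀ with rfl | he₀
  · exact hB0
  rcases lt_or_ge P.totalDegree e₀ with hlt | hle
  · rw [homogeneousComponent_eq_zero _ _ hlt]
    simp
  have hsum : ∑ e ∈ Finset.range (P.totalDegree + 1),
      (pderiv i H * pderiv j (homogeneousComponent e P) -
        pderiv j H * pderiv i (homogeneousComponent e P)) = 0 := by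
    rw [Finset.sum_sub_distrib, ← Finset.mul_sum, ← Finset.mul_sum, ← map_sum, ← map_sum,
      sum_homogeneousComponent]
    exact hbr i j
  have hmain := congrArg (homogeneousComponent ((dH - 1) + (e₀ - 1))) hsum
  rw [map_sum, map_zero] at hmain
  rw [Finset.sum_eq_single_of_mem e₀ (Finset.mem_range.mpr (by omega))] at hmain
  · rwa [homogeneousComponent_of_mem ((mem_homogeneousSubmodule _ _).mpr (hBhom e₀ he₀)),
      if_pos rfl] at hmain
  · intro b _ hbne
    rcases Nat.eq_zero_or_pos b with rfl | hbpos
    · rw [hB0, map_zero]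
    · rw [homogeneousComponent_of_mem ((mem_homogeneousSubmodule _ _).mpr (hBhom b hbpos)),
        if_neg (by omega)]

end Br

theorem stmt1 (n : ℕ) (hn : 1 ≤ n) (H : MvPolynomial (Fin n) ℂ) (dH : ℕ)
    (hHsf : Squarefree H) (hHhom : H.IsHomogeneous dH) (hdH : 0 < dH)
    (P : MvPolynomial (Fin n) ℂ)
    (hbr : ∀ i j : Fin n, pderiv i H * pderiv j P - pderiv j H * pderiv i P = 0) :
    ∃ w : Polynomial ℂ, P = Polynomial.aeval H w := by
  have hcomp := fun e => Br.key H dH hHsf hHhom hdH e (homogeneousComponent e P)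
    (homogeneousComponent_isHomogeneous e P) (Br.comp_bracket hHhom hdH hbr e)
  choose w hw using hcomp
  refine ⟨∑ e ∈ Finset.range (P.totalDegree + 1), w e, ?_⟩
  rw [map_sum]
  conv_lhs => rw [← sum_homogeneousComponent P]
  exact Finset.sum_congr rfl fun e _ => hw e
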